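/- For every α > 0 there exists β > 0 such that for every integer N ≥ 1, every h > 0, and every function f : ZMod N → ℂ, the discrete gradient ∇_h f(j) = (f(j+1) − f(j−1))/(2h) and the discrete Laplacian Δ_h f(j) = (f(j+1) + f(j−1) − 2f(j))/h² satisfy the relative bound ‖∇_h f‖₂ ≤ α·‖Δ_h f‖₂ + β·‖f‖₂, where ‖g‖₂ = (Σ_{j ∈ ZMod N} |g(j)|²)^{1/2}. -/

import Mathlib

/-- The centered difference operator with step `h` on periodic sequences:
`∇_h f(j) = (f(j+1) - f(j-1))/(2h)`. -/
noncomputable def discGrad {N : ℕ} (h : ℝ) (f : ZMod N → ℂ) (j : ZMod N) : ℂ :=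
  (f (j + 1) - f (j - 1)) / (2 * h)

/-- The discrete Laplacian with step `h` on periodic sequences:
`Δ_h f(j) = (f(j+1) + f(j-1) - 2f(j))/h²`. -/
noncomputable def discLap {N : ℕ} (h : ℝ) (f : ZMod N → ℂ) (j : ZMod N) : ℂ :=
  (f (j + 1) + f (j - 1) - 2 * f j) / (h : ℂ) ^ 2

/-- The Euclidean (ℓ²) norm `‖g‖₂ = (Σ_j |g(j)|²)^{1/2}` on `ℂ^{ZMod N}`. -/
noncomputable def l2Norm {N : ℕ} [NeZero N] (g : ZMod N → ℂ) : ℝ :=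
  Real.sqrt (∑ j : ZMod N, ‖g j‖ ^ 2)

lemma zmod_sum_shift {N : ℕ} [NeZero N] (F : ZMod N → ℝ) (c : ZMod N) :
    ∑ j, F (j + c) = ∑ j, F j :=
  Fintype.sum_equiv (Equiv.addRight c) _ _ (fun _ => rfl)

/-- Summation-by-parts identity on the discrete torus. -/
lemma key_identity {N : ℕ} [NeZero N] (f : ZMod N → ℂ) :
    ∑ j, Complex.normSq (f (j + 1) - f j)
      = (-(∑ j, (f (j + 1) + f (j - 1) - 2 * f j) * (starRingEnd ℂ) (f j))).re := by
  have hB : ∑ j, (f (j - 1) * (starRingEnd ℂ) (f j)).re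
      = ∑ j, (f (j + 1) * (starRingEnd ℂ) (f j)).re := by
    have := zmod_sum_shift (fun j => (f (j - 1) * (starRingEnd ℂ) (f j)).re) 1
    simp only [add_sub_cancel_right] at this
    rw [← this]
    apply Finset.sum_congr rfl
    intro j _
    simp [Complex.mul_re]
    ring
  have hS : ∑ j, Complex.normSq (f (j + 1)) = ∑ j, Complex.normSq (f j) :=
    zmod_sum_shift (fun j => Complex.normSq (f j)) 1
  rw [Complex.neg_re, Complex.re_sum]
  have lhs_eq : ∑ j, Complex.normSq (f (j + 1) - f j)
      = ∑ j, (Complex.normSq (f (j+1)) + Complex.normSq (f j)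
          - 2 * (f (j+1) * (starRingEnd ℂ) (f j)).re) := by
    apply Finset.sum_congr rfl
    intro j _
    simp [Complex.normSq_apply, Complex.mul_re]
    ring
  rw [lhs_eq]
  rw [Finset.sum_sub_distrib, Finset.sum_add_distrib, hS, ← Finset.sum_neg_distrib]
  have rhs_eq : ∀ j : ZMod N, -((f (j + 1) + f (j - 1) - 2 * f j) * (starRingEnd ℂ) (f j)).re
      = 2 * Complex.normSq (f j) - (f (j+1) * (starRingEnd ℂ) (f j)).re
        - (f (j-1) * (starRingEnd ℂ) (f j)).re := by
    intro j
    simp [Complex.normSq_apply, Complex.mul_re, Complex.add_re, Complex.sub_re]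
    ring
  rw [Finset.sum_congr rfl (fun j _ => rhs_eq j)]
  rw [Finset.sum_sub_distrib, Finset.sum_sub_distrib, hB]
  rw [← Finset.mul_sum, ← Finset.mul_sum]
  ring


/-- Kato–Rellich relative bound of the discrete gradient with respect to
the discrete Laplacian: for every `α > 0` there is `β > 0`, uniform in `N` and `h`, with
`‖∇_h f‖₂ ≤ α·‖Δ_h f‖₂ + β·‖f‖₂`. -/
theorem thm_kato_rellich (α : ℝ) (hα : 0 < α) :
    ∃ β > 0, ∀ (N : ℕ) (hN : 1 ≤ N) (h : ℝ), 0 < h → ∀ f : ZMod N → ℂ,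
      haveI : NeZero N := ⟨Nat.one_le_iff_ne_zero.mp hN⟩
      l2Norm (discGrad h f) ≤ α * l2Norm (discLap h f) + β * l2Norm f := by
  refine ⟨1/(4*α), by positivity, ?_⟩
  intro N hN h hh f
  haveI : NeZero N := ⟨Nat.one_le_iff_ne_zero.mp hN⟩
  set β : ℝ := 1/(4*α) with hβdef
  have h2 : (0:ℝ) < h^2 := by positivity
  set g : ZMod N → ℂ := fun j => f (j + 1) + f (j - 1) - 2 * f j with hgdef
  have habsLap : ∀ j, ‖discLap h f j‖ = ‖g j‖ / h^2 := by
    intro j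
    rw [discLap, norm_div, hgdef]
    congr 1
    rw [← Complex.ofReal_pow, Complex.norm_of_nonneg h2.le]
  -- summation by parts bound
  have hT : ∑ j, Complex.normSq (f (j + 1) - f j)
      ≤ ∑ j, ‖g j‖ * ‖f j‖ := by
    rw [key_identity f]
    calc (-(∑ j, (f (j+1) + f (j-1) - 2*f j) * (starRingEnd ℂ) (f j))).re
        ≤ ‖-(∑ j, (f (j+1) + f (j-1) - 2*f j) * (starRingEnd ℂ) (f j))‖ :=
          Complex.re_le_norm _
      _ = ‖∑ j, (f (j+1) + f (j-1) - 2*f j) * (starRingEnd ℂ) (f j)‖ := by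
          rw [norm_neg]
      _ ≤ ∑ j, ‖(f (j+1) + f (j-1) - 2*f j) * (starRingEnd ℂ) (f j)‖ :=
          norm_sum_le _ _
      _ = ∑ j, ‖g j‖ * ‖f j‖ := by
          simp [hgdef, norm_mul, Complex.norm_conj]
  -- gradient pointwise
  have e1 : ∀ j, ‖discGrad h f j‖^2
      = Complex.normSq (f (j+1) - f (j-1)) / (4*h^2) := by
    intro j
    rw [discGrad, norm_div, div_pow, Complex.sq_norm]
    have h2h : ‖2 * (h:ℂ)‖ = 2 * h := by
      simp [abs_of_pos hh]
    rw [h2h]; ring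
  have tri : ∀ a b c : ℂ, Complex.normSq (a - c)
      ≤ 2 * Complex.normSq (a - b) + 2 * Complex.normSq (b - c) := by
    intro a b c
    have h1 : ‖a - c‖ ≤ ‖a - b‖ + ‖b - c‖ :=
      norm_sub_le_norm_sub_add_norm_sub a b c
    rw [← Complex.sq_norm, ← Complex.sq_norm, ← Complex.sq_norm]
    nlinarith [h1, norm_nonneg (a-b), norm_nonneg (b-c),
      norm_nonneg (a-c), sq_nonneg (‖a-b‖ - ‖b-c‖)]
  have hshift : ∑ j : ZMod N, Complex.normSq (f j - f (j-1))
      = ∑ j : ZMod N, Complex.normSq (f (j + 1) - f j) := by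
    have := zmod_sum_shift (fun j => Complex.normSq (f (j + 1) - f j)) (-1)
    rw [← this]
    apply Finset.sum_congr rfl
    intro j _
    rw [← sub_eq_add_neg, sub_add_cancel]
  have hgrad : ∑ j, ‖discGrad h f j‖^2
      ≤ (∑ j, Complex.normSq (f (j + 1) - f j)) / h^2 := by
    calc ∑ j, ‖discGrad h f j‖^2
        = (∑ j, Complex.normSq (f (j+1) - f (j-1))) / (4*h^2) := by
          rw [Finset.sum_div]; exact Finset.sum_congr rfl (fun j _ => e1 j)
      _ ≤ (∑ j : ZMod N, (2 * Complex.normSq (f (j+1) - f j)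
            + 2 * Complex.normSq (f j - f (j-1)))) / (4*h^2) := by
          have hs := Finset.sum_le_sum (s := Finset.univ)
            (fun (j : ZMod N) _ => tri (f (j+1)) (f j) (f (j-1)))
          exact (div_le_div_iff_of_pos_right (by positivity)).mpr hs
      _ = (∑ j, Complex.normSq (f (j + 1) - f j)) / h^2 := by
          rw [Finset.sum_add_distrib, ← Finset.mul_sum, ← Finset.mul_sum, hshift]
          field_simp
          ring
  have main2 : ∑ j, ‖discGrad h f j‖^2
      ≤ ∑ j, ‖discLap h f j‖ * ‖f j‖ := by
    refine hgrad.trans ?_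
    rw [div_le_iff₀ h2]
    calc ∑ j, Complex.normSq (f (j + 1) - f j)
        ≤ ∑ j, ‖g j‖ * ‖f j‖ := hT
      _ = (∑ j, ‖discLap h f j‖ * ‖f j‖) * h^2 := by
          rw [Finset.sum_mul]
          refine Finset.sum_congr rfl fun j _ => ?_
          rw [habsLap j]; field_simp
  have hCS : ∑ j, ‖discLap h f j‖ * ‖f j‖
      ≤ l2Norm (discLap h f) * l2Norm f := by
    have hcs := Finset.sum_mul_sq_le_sq_mul_sq Finset.univ
      (fun j => ‖discLap h f j‖) (fun j => ‖f j‖)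
    have hnn : 0 ≤ ∑ j, ‖discLap h f j‖ * ‖f j‖ :=
      Finset.sum_nonneg fun j _ => mul_nonneg (norm_nonneg _) (norm_nonneg _)
    rw [l2Norm, l2Norm, ← Real.sqrt_mul (Finset.sum_nonneg fun j _ => sq_nonneg _)]
    calc ∑ j, ‖discLap h f j‖ * ‖f j‖
        = Real.sqrt ((∑ j, ‖discLap h f j‖ * ‖f j‖)^2) :=
          (Real.sqrt_sq hnn).symm
      _ ≤ Real.sqrt ((∑ j, ‖discLap h f j‖^2) * ∑ j, ‖f j‖^2) :=
          Real.sqrt_le_sqrt hcs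
  set X := l2Norm (discLap h f) with hXdef
  set Y := l2Norm f with hYdef
  have hX : 0 ≤ X := Real.sqrt_nonneg _
  have hY : 0 ≤ Y := Real.sqrt_nonneg _
  have h4 : 4 * α * β = 1 := by rw [hβdef]; field_simp
  have hfin : X * Y ≤ (α * X + β * Y)^2 := by
    nlinarith [sq_nonneg (α*X - β*Y), mul_nonneg hX hY]
  have hβnn : 0 ≤ β := by positivity
  calc l2Norm (discGrad h f) = Real.sqrt (∑ j, ‖discGrad h f j‖^2) := rfl
    _ ≤ Real.sqrt (X*Y) := Real.sqrt_le_sqrt (main2.trans hCS)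
    _ ≤ Real.sqrt ((α*X+β*Y)^2) := Real.sqrt_le_sqrt hfin
    _ = α*X+β*Y :=
        Real.sqrt_sq (add_nonneg (mul_nonneg hα.le hX) (mul_nonneg hβnn hY))
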